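/- Suppose that for all probability measures P in a set 𝒫 we have P(X ∈ Ξ) ≥ ε > 0 and |g| ≤ M on the support. Let τ* = sup over P ∈ 𝒫 of E_P[g(X)·1_Ξ(X)]/E_P[1_Ξ(X)]. Then τ* is finite, and τ* equals the infimum of all τ ∈ ℝ such that sup over P ∈ 𝒫 of E_P[g(X)·1_Ξ(X) − τ·1_Ξ(X)] ≤ 0. -/

import Mathlib

open MeasureTheory

theorem stmt10 {Ω : Type*} [MeasurableSpace Ω] (Ps : Set (Measure Ω))
    (hPs : Ps.Nonempty) (hprob : ∀ P ∈ Ps, IsProbabilityMeasure P)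
    (Ξ : Set Ω) (hΞ : MeasurableSet Ξ)
    (g : Ω → ℝ) (hg : Measurable g) (M : ℝ) (hbound : ∀ x, |g x| ≤ M)
    (ε : ℝ) (hε : 0 < ε) (hlow : ∀ P ∈ Ps, ε ≤ (P Ξ).toReal) :
    BddAbove {r : ℝ | ∃ P ∈ Ps, r = (∫ x in Ξ, g x ∂P) / (P Ξ).toReal} ∧
      sSup {r : ℝ | ∃ P ∈ Ps, r = (∫ x in Ξ, g x ∂P) / (P Ξ).toReal}
        = sInf {τ : ℝ | ∀ P ∈ Ps, ∫ x in Ξ, (g x - τ) ∂P ≤ 0} := by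
  set S := {r : ℝ | ∃ P ∈ Ps, r = (∫ x in Ξ, g x ∂P) / (P Ξ).toReal} with hS
  have hpos : ∀ P ∈ Ps, 0 < (P Ξ).toReal := fun P hP => lt_of_lt_of_le hε (hlow P hP)
  have hint : ∀ P ∈ Ps, Integrable g (P.restrict Ξ) := by
    intro P hP
    have := hprob P hP
    exact ⟨hg.aestronglyMeasurable,
      HasFiniteIntegral.of_bounded (C := M) (ae_of_all _ fun x => hbound x)⟩
  -- bound on ratios
  have hub : ∀ r ∈ S, r ≤ M := by
    rintro r ⟨P, hP, rfl⟩
    have := hprob P hP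
    rw [div_le_iff₀ (hpos P hP)]
    calc (∫ x in Ξ, g x ∂P) ≤ ∫ x in Ξ, M ∂P := by
          apply integral_mono (hint P hP) (integrable_const M)
          intro x; exact (abs_le.mp (hbound x)).2
      _ = (P Ξ).toReal * M := by simp [mul_comm, measureReal_def]
      _ = M * (P Ξ).toReal := mul_comm _ _
  have hbdd : BddAbove S := ⟨M, hub⟩
  have hSne : S.Nonempty := by
    obtain ⟨P, hP⟩ := hPs
    exact ⟨_, P, hP, rfl⟩
  refine ⟨hbdd, ?_⟩
  have key : {τ : ℝ | ∀ P ∈ Ps, ∫ x in Ξ, (g x - τ) ∂P ≤ 0} = upperBounds S := by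
    ext τ
    constructor
    · rintro h r ⟨P, hP, rfl⟩
      have hP' := hprob P hP
      have h1 := h P hP
      rw [integral_sub (hint P hP) (integrable_const τ), integral_const,
        measureReal_restrict_apply_univ, measureReal_def, smul_eq_mul, sub_nonpos] at h1
      rw [div_le_iff₀ (hpos P hP)]
      linarith
    · intro h P hP
      have hP' := hprob P hP
      have h1 : (∫ x in Ξ, g x ∂P) / (P Ξ).toReal ≤ τ := h ⟨P, hP, rfl⟩
      rw [div_le_iff₀ (hpos P hP)] at h1
      rw [integral_sub (hint P hP) (integrable_const τ), integral_const,
        measureReal_restrict_apply_univ, measureReal_def, smul_eq_mul, sub_nonpos]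
      linarith
  rw [key, csInf_upperBounds_eq_csSup hbdd hSne]
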